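/- Let r be a Markov kernel on S_V whose invariant density is π_V, and let ψ : S_U → [0,∞) be a probability density with respect to μ that is strictly positive almost everywhere. Suppose ∫_{S_U} p(u,u) μ(du) < ∞. If ∫_{S_U} ∫_{S_V} π_{U|V}(u|v)³ π_{V|U}(v|u) / ψ(u)² ν(dv) μ(du) < ∞, then ∫_{S_U} ∫_{S_V} ∫_{S_V} ( π_{U|V}(u|v)/ψ(u) )² r(v′,dv) π_{V|U}(v′|u) ψ(u) ν(dv′) μ(du) < ∞; that is, the dual Monte Carlo estimator (1/N) Σ_{i=1}^N π_{U|V}(U*_i|V*_i)/ψ(U*_i), with (U*_i,V*_i) iid from ζ(u,v) = ( ∫_{S_V} r(v′,dv) π_{V|U}(v′|u) ν(dv′) ) ψ(u), has finite variance. -/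

import Mathlib

open MeasureTheory
open scoped ENNReal

/-- Let `r` be a Markov kernel on `S_V` with invariant density
`π_V`, and let `ψ` be an a.e. positive probability density on `S_U`.  Suppose
`∫ p(u,u) μ(du) < ∞`.  If
`∫∫ π_{U|V}(u|v)³ π_{V|U}(v|u) / ψ(u)² ν(dv) μ(du) < ∞`, then
`∫∫∫ (π_{U|V}(u|v)/ψ(u))² r(v',dv) π_{V|U}(v'|u) ψ(u) ν(dv') μ(du) < ∞`,
i.e. the dual Monte Carlo estimator based on `ζ` has finite variance. -/
theorem dual_monte_carlo_estimator_finite_variance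
    {SU SV : Type*} [MeasurableSpace SU] [MeasurableSpace SV]
    [MeasurableSpace.CountablyGenerated SU] [MeasurableSpace.CountablyGenerated SV]
    (μ : Measure SU) (ν : Measure SV) [SigmaFinite μ] [SigmaFinite ν]
    (piUV : SU → SV → ℝ)
    (hmeas : Measurable (Function.uncurry piUV))
    (hnn : ∀ u v, 0 ≤ piUV u v)
    (hprob : ∫⁻ q, ENNReal.ofReal (piUV q.1 q.2) ∂(μ.prod ν) = 1)
    (piU : SU → ℝ) (hpiU : ∀ u, piU u = ∫ v, piUV u v ∂ν)
    (piV : SV → ℝ) (hpiV : ∀ v, piV v = ∫ u, piUV u v ∂μ)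
    (hUpos : ∀ᵐ u ∂μ, 0 < piU u)
    (hVpos : ∀ᵐ v ∂ν, 0 < piV v)
    (p : SU → SU → ℝ)
    (hp : ∀ u u', p u u' = ∫ v, (piUV u' v / piV v) * (piUV u v / piU u) ∂ν)
    (r : ProbabilityTheory.Kernel SV SV) [ProbabilityTheory.IsMarkovKernel r]
    (hinv : ∀ A : Set SV, MeasurableSet A →
      ∫⁻ v, r v A * ENNReal.ofReal (piV v) ∂ν = ∫⁻ v in A, ENNReal.ofReal (piV v) ∂ν)
    (psi : SU → ℝ)
    (hpsi_nn : ∀ u, 0 ≤ psi u)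
    (hpsi_prob : ∫⁻ u, ENNReal.ofReal (psi u) ∂μ = 1)
    (hpsi_pos : ∀ᵐ u ∂μ, 0 < psi u)
    (hint : ∫⁻ u, ENNReal.ofReal (p u u) ∂μ < ⊤)
    (hmom : ∫⁻ u, ∫⁻ v, ENNReal.ofReal
        ((piUV u v / piV v) ^ 3 * (piUV u v / piU u) / (psi u) ^ 2) ∂ν ∂μ < ⊤) :
    ∫⁻ u, ∫⁻ v', (∫⁻ v, ENNReal.ofReal ((piUV u v / (piV v * psi u)) ^ 2) ∂(r v')) *
      ENNReal.ofReal ((piUV u v' / piU u) * psi u) ∂ν ∂μ < ⊤ := by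
  classical
  -- basic measurability facts
  have hsec_meas : ∀ u, Measurable (fun v => piUV u v) := fun u =>
    hmeas.comp measurable_prodMk_left
  have hpiV_meas : Measurable piV := by
    have h : piV = fun v => ∫ u, piUV u v ∂μ := funext hpiV
    rw [h]
    exact (hmeas.stronglyMeasurable.integral_prod_left).measurable
  have hpiU_meas : Measurable piU := by
    have h : piU = fun u => ∫ v, piUV u v ∂ν := funext hpiU
    rw [h]
    exact (hmeas.stronglyMeasurable.integral_prod_right).measurable
  have hpiVnn : ∀ v, 0 ≤ piV v := fun v => by
    rw [hpiV]; exact integral_nonneg fun u => hnn u v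
  have hpiUnn : ∀ u, 0 ≤ piU u := fun u => by
    rw [hpiU]; exact integral_nonneg fun v => hnn u v
  have hPmeas : Measurable fun v => ENNReal.ofReal (piV v) := hpiV_meas.ennreal_ofReal
  -- the two comparison functions
  set M : SU → ℝ≥0∞ := fun u => ∫⁻ v, ENNReal.ofReal
      ((piUV u v / piV v) ^ 3 * (piUV u v / piU u) / (psi u) ^ 2) ∂ν with hMdef
  set T2 : SU → ℝ≥0∞ := fun u => ∫⁻ v, ENNReal.ofReal
      ((piUV u v / piV v) * (piUV u v / piU u)) ∂ν with hT2def
  have hT2meas : Measurable T2 := by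
    rw [hT2def]
    apply Measurable.lintegral_prod_right (f := fun u v =>
      ENNReal.ofReal ((piUV u v / piV v) * (piUV u v / piU u)))
    exact ((hmeas.div (hpiV_meas.comp measurable_snd)).mul
      (hmeas.div (hpiU_meas.comp measurable_fst))).ennreal_ofReal
  -- invariance of π_V for r, in integral form
  have invariance : ∀ g : SV → ℝ≥0∞, Measurable g →
      ∫⁻ v', (∫⁻ v, g v ∂(r v')) * ENNReal.ofReal (piV v') ∂ν
        = ∫⁻ v, g v * ENNReal.ofReal (piV v) ∂ν := by
    intro g hg
    set c : SV → ℝ≥0∞ := fun v => ENNReal.ofReal (piV v) with hc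
    have hcm : Measurable c := hPmeas
    have hrg : Measurable fun v' => ∫⁻ v, g v ∂(r v') :=
      Measurable.lintegral_kernel_prod_right
        (f := fun _ v => g v) (hg.comp measurable_snd)
    have hbind : (ν.withDensity c).bind r = ν.withDensity c := by
      ext A hA
      rw [Measure.bind_apply hA r.measurable.aemeasurable,
        lintegral_withDensity_eq_lintegral_mul ν hcm (r.measurable_coe hA)]
      have h1 : ∫⁻ v, (c * fun v => (r v) A) v ∂ν = ∫⁻ v, (r v) A * c v ∂ν := by
        apply lintegral_congr; intro v; simp [mul_comm]
      rw [h1, hinv A hA, withDensity_apply c hA]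
    calc ∫⁻ v', (∫⁻ v, g v ∂(r v')) * c v' ∂ν
        = ∫⁻ v', (c * fun v' => ∫⁻ v, g v ∂(r v')) v' ∂ν := by
          apply lintegral_congr; intro v'; simp [mul_comm]
      _ = ∫⁻ v', (∫⁻ v, g v ∂(r v')) ∂(ν.withDensity c) :=
          (lintegral_withDensity_eq_lintegral_mul ν hcm hrg).symm
      _ = ∫⁻ v, g v ∂((ν.withDensity c).bind r) :=
          (Measure.lintegral_bind r.measurable.aemeasurable hg.aemeasurable).symm
      _ = ∫⁻ v, g v ∂(ν.withDensity c) := by rw [hbind]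
      _ = ∫⁻ v, (c * g) v ∂ν := lintegral_withDensity_eq_lintegral_mul ν hcm hg
      _ = ∫⁻ v, g v * c v ∂ν := by
          apply lintegral_congr; intro v; simp [mul_comm]
  -- a.e. finiteness of sections of piUV
  have hsec : ∀ᵐ u ∂μ, ∫⁻ v, ENNReal.ofReal (piUV u v) ∂ν < ⊤ := by
    have hm : Measurable fun u => ∫⁻ v, ENNReal.ofReal (piUV u v) ∂ν :=
      Measurable.lintegral_prod_right (f := fun u v => ENNReal.ofReal (piUV u v))
        hmeas.ennreal_ofReal
    apply ae_lt_top hm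
    have hf : AEMeasurable (fun q : SU × SV => ENNReal.ofReal (piUV q.1 q.2)) (μ.prod ν) :=
      (hmeas.ennreal_ofReal).aemeasurable
    have h1 := (lintegral_prod (fun q => ENNReal.ofReal (piUV q.1 q.2)) hf).symm.trans hprob
    have h2 : ∫⁻ x, ∫⁻ v, ENNReal.ofReal (piUV x v) ∂ν ∂μ = 1 := by simpa using h1
    rw [h2]
    exact ENNReal.one_ne_top
  -- elementary ENNReal inequality
  have sqineq : ∀ X Y : ℝ≥0∞, X * Y ≤ X ^ 2 + Y ^ 2 := by
    intro X Y
    rcases le_total X Y with h | h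
    · calc X * Y ≤ Y * Y := mul_le_mul_left h Y
        _ = Y ^ 2 := (sq Y).symm
        _ ≤ X ^ 2 + Y ^ 2 := le_add_self
    · calc X * Y ≤ X * X := mul_le_mul_right h X
        _ = X ^ 2 := (sq X).symm
        _ ≤ X ^ 2 + Y ^ 2 := le_self_add
  -- main pointwise (in u) estimate
  have main : ∀ u, 0 < piU u → 0 < psi u →
      (∫⁻ v', (∫⁻ v, ENNReal.ofReal ((piUV u v / (piV v * psi u)) ^ 2) ∂(r v')) *
        ENNReal.ofReal ((piUV u v' / piU u) * psi u) ∂ν) ≤ T2 u + M u := by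
    intro u ht hk
    set t := piU u with htdef
    set k := psi u with hkdef
    set A : SV → ℝ≥0∞ := fun v => ENNReal.ofReal ((piUV u v / (piV v * k)) ^ 2) with hAdef
    have hAm : Measurable A := by
      rw [hAdef]
      exact (((hsec_meas u).div ((hpiV_meas.mul measurable_const))).pow
        measurable_const).ennreal_ofReal
    have hA2m : Measurable fun v => (A v) ^ 2 := hAm.pow measurable_const
    set D : SV → ℝ≥0∞ := fun v' => ENNReal.ofReal (piUV u v' * k / (t * piV v')) with hDdef
    have hDm : Measurable D := by
      rw [hDdef]
      exact (((hsec_meas u).mul measurable_const).div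
        (measurable_const.mul hpiV_meas)).ennreal_ofReal
    have hst : 0 < Real.sqrt t := Real.sqrt_pos.mpr ht
    set x : ℝ := k / Real.sqrt t with hxdef
    have hx : 0 < x := div_pos hk hst
    set w : ℝ≥0∞ := ENNReal.ofReal x with hwdef
    have hw0 : w ≠ 0 := (ENNReal.ofReal_pos.mpr hx).ne'
    have hwt : w ≠ ⊤ := ENNReal.ofReal_ne_top
    have subCS : ∀ X Y : ℝ≥0∞, X * Y ≤ w ^ 2 * X ^ 2 + w⁻¹ ^ 2 * Y ^ 2 := by
      intro X Y
      have h1 : X * Y = (w * X) * (w⁻¹ * Y) := by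
        rw [mul_mul_mul_comm, ENNReal.mul_inv_cancel hw0 hwt, one_mul]
      rw [h1]
      calc (w * X) * (w⁻¹ * Y) ≤ (w * X) ^ 2 + (w⁻¹ * Y) ^ 2 := sqineq _ _
        _ = w ^ 2 * X ^ 2 + w⁻¹ ^ 2 * Y ^ 2 := by rw [mul_pow, mul_pow]
    have hrA2 : Measurable fun v' => ∫⁻ v, (A v) ^ 2 ∂(r v') :=
      Measurable.lintegral_kernel_prod_right (f := fun _ v => (A v) ^ 2)
        (hA2m.comp measurable_snd)
    -- pointwise bound in v'
    have step1 : ∀ᵐ v' ∂ν,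
        (∫⁻ v, A v ∂(r v')) * ENNReal.ofReal ((piUV u v' / t) * k)
          ≤ w ^ 2 * ((∫⁻ v, (A v) ^ 2 ∂(r v')) * ENNReal.ofReal (piV v'))
            + (w⁻¹ ^ 2 * (D v') ^ 2) * ENNReal.ofReal (piV v') := by
      filter_upwards [hVpos] with v' hb'
      have hCPD : ENNReal.ofReal ((piUV u v' / t) * k)
          = ENNReal.ofReal (piV v') * D v' := by
        rw [hDdef, ← ENNReal.ofReal_mul (hpiVnn v')]
        congr 1
        field_simp
      rw [hCPD]
      have hD_ne : D v' ≠ ⊤ := ENNReal.ofReal_ne_top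
      haveI : IsProbabilityMeasure (r v') :=
        ProbabilityTheory.IsMarkovKernel.isProbabilityMeasure v'
      calc (∫⁻ v, A v ∂(r v')) * (ENNReal.ofReal (piV v') * D v')
          = ((∫⁻ v, A v ∂(r v')) * D v') * ENNReal.ofReal (piV v') := by ring
        _ = (∫⁻ v, A v * D v' ∂(r v')) * ENNReal.ofReal (piV v') := by
            rw [lintegral_mul_const _ hAm]
        _ ≤ (∫⁻ v, (w ^ 2 * (A v) ^ 2 + w⁻¹ ^ 2 * (D v') ^ 2) ∂(r v'))
              * ENNReal.ofReal (piV v') := by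
            exact mul_le_mul_left (lintegral_mono fun v => subCS _ _) _
        _ = (w ^ 2 * (∫⁻ v, (A v) ^ 2 ∂(r v')) + w⁻¹ ^ 2 * (D v') ^ 2)
              * ENNReal.ofReal (piV v') := by
            rw [lintegral_add_left (hA2m.const_mul _),
              lintegral_const_mul _ hA2m, lintegral_const, measure_univ, mul_one]
        _ = w ^ 2 * ((∫⁻ v, (A v) ^ 2 ∂(r v')) * ENNReal.ofReal (piV v'))
              + (w⁻¹ ^ 2 * (D v') ^ 2) * ENNReal.ofReal (piV v') := by ring
    -- first term equals M u, via invariance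
    have hfirst : ∫⁻ v', w ^ 2 * ((∫⁻ v, (A v) ^ 2 ∂(r v')) * ENNReal.ofReal (piV v')) ∂ν
        = M u := by
      rw [lintegral_const_mul' _ _ (ENNReal.pow_ne_top hwt),
        invariance (fun v => (A v) ^ 2) hA2m,
        ← lintegral_const_mul' _ _ (ENNReal.pow_ne_top hwt), hMdef]
      apply lintegral_congr_ae
      filter_upwards [hVpos] with v hb
      rw [hAdef]
      have h1 : w ^ 2 = ENNReal.ofReal (x ^ 2) := (ENNReal.ofReal_pow hx.le 2).symm
      have h2 : (ENNReal.ofReal ((piUV u v / (piV v * k)) ^ 2)) ^ 2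
          = ENNReal.ofReal (((piUV u v / (piV v * k)) ^ 2) ^ 2) :=
        (ENNReal.ofReal_pow (sq_nonneg _) 2).symm
      rw [h1, h2, ← ENNReal.ofReal_mul (by positivity),
        ← ENNReal.ofReal_mul (by positivity)]
      congr 1
      rw [hxdef, div_pow, Real.sq_sqrt ht.le]
      rw [← htdef, ← hkdef]
      field_simp
    -- second term equals T2 u
    have hsecond : ∫⁻ v', (w⁻¹ ^ 2 * (D v') ^ 2) * ENNReal.ofReal (piV v') ∂ν = T2 u := by
      rw [hT2def]
      apply lintegral_congr_ae
      filter_upwards [hVpos] with v' hb'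
      have h1 : w⁻¹ = ENNReal.ofReal x⁻¹ := (ENNReal.ofReal_inv_of_pos hx).symm
      have h2 : w⁻¹ ^ 2 = ENNReal.ofReal (x⁻¹ ^ 2) := by
        rw [h1]; exact (ENNReal.ofReal_pow (by positivity) 2).symm
      have h3 : (D v') ^ 2 = ENNReal.ofReal ((piUV u v' * k / (t * piV v')) ^ 2) := by
        rw [hDdef]
        exact (ENNReal.ofReal_pow (div_nonneg (mul_nonneg (hnn u v') hk.le)
          (mul_nonneg ht.le (hpiVnn v'))) 2).symm
      rw [h2, h3, ← ENNReal.ofReal_mul (by positivity),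
        ← ENNReal.ofReal_mul (by positivity)]
      congr 1
      rw [hxdef, inv_div, div_pow, Real.sq_sqrt ht.le]
      rw [← htdef]
      field_simp
    calc ∫⁻ v', (∫⁻ v, A v ∂(r v')) * ENNReal.ofReal ((piUV u v' / t) * k) ∂ν
        ≤ ∫⁻ v', (w ^ 2 * ((∫⁻ v, (A v) ^ 2 ∂(r v')) * ENNReal.ofReal (piV v'))
            + (w⁻¹ ^ 2 * (D v') ^ 2) * ENNReal.ofReal (piV v')) ∂ν :=
          lintegral_mono_ae step1
      _ = (∫⁻ v', w ^ 2 * ((∫⁻ v, (A v) ^ 2 ∂(r v')) * ENNReal.ofReal (piV v')) ∂ν)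
            + ∫⁻ v', (w⁻¹ ^ 2 * (D v') ^ 2) * ENNReal.ofReal (piV v') ∂ν :=
          lintegral_add_left ((measurable_const.mul (hrA2.mul hPmeas))) _
      _ = M u + T2 u := by rw [hfirst, hsecond]
      _ = T2 u + M u := add_comm _ _
  -- bound showing T2 u is finite whenever M u is
  have fin : ∀ u, 0 < piU u → 0 < psi u →
      T2 u ≤ M u + ENNReal.ofReal (psi u / piU u) * ∫⁻ v, ENNReal.ofReal (piUV u v) ∂ν := by
    intro u ht hk
    have hptwise : ∀ᵐ v ∂ν, ENNReal.ofReal ((piUV u v / piV v) * (piUV u v / piU u))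
        ≤ ENNReal.ofReal ((piUV u v / piV v) ^ 3 * (piUV u v / piU u) / (psi u) ^ 2)
          + ENNReal.ofReal (psi u / piU u) * ENNReal.ofReal (piUV u v) := by
      filter_upwards [hVpos] with v hb
      have hnn1 : (0:ℝ) ≤ piUV u v / piV v := div_nonneg (hnn u v) (hpiVnn v)
      have hnn2 : (0:ℝ) ≤ piUV u v / piU u := div_nonneg (hnn u v) (hpiUnn u)
      have hnn3 : (0:ℝ) ≤ (piUV u v / piV v) ^ 3 * (piUV u v / piU u) / (psi u) ^ 2 :=
        div_nonneg (mul_nonneg (pow_nonneg hnn1 3) hnn2) (sq_nonneg _)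
      rw [← ENNReal.ofReal_mul (div_nonneg (hpsi_nn u) (hpiUnn u)),
        ← ENNReal.ofReal_add hnn3 (mul_nonneg (div_nonneg (hpsi_nn u) (hpiUnn u)) (hnn u v))]
      apply ENNReal.ofReal_le_ofReal
      set a := piUV u v with hadef
      set b := piV v with hbdef
      set t := piU u with htdef
      set k := psi u with hkdef
      have ha : 0 ≤ a := hnn u v
      have hρ : 0 ≤ a / b := div_nonneg ha hb.le
      have hs : 0 ≤ a / t := div_nonneg ha ht.le
      have hcube : 0 ≤ (a / b) ^ 3 + k ^ 3 - (a / b) * k ^ 2 := by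
        nlinarith [mul_nonneg hρ (sq_nonneg (a / b - k)),
          mul_nonneg (hpsi_nn u) (sq_nonneg (a / b - k)),
          mul_nonneg (mul_nonneg hρ hρ) (hpsi_nn u)]
      have expand : (a / b) ^ 3 * (a / t) / k ^ 2 + k / t * a - (a / b) * (a / t)
          = (a / t) * (((a / b) ^ 3 + k ^ 3 - (a / b) * k ^ 2) / k ^ 2) := by
        field_simp
      have h2 : 0 ≤ (a / t) * (((a / b) ^ 3 + k ^ 3 - (a / b) * k ^ 2) / k ^ 2) :=
        mul_nonneg hs (div_nonneg hcube (sq_nonneg k))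
      linarith [expand, h2]
    calc T2 u ≤ ∫⁻ v, (ENNReal.ofReal ((piUV u v / piV v) ^ 3 * (piUV u v / piU u) / (psi u) ^ 2)
          + ENNReal.ofReal (psi u / piU u) * ENNReal.ofReal (piUV u v)) ∂ν :=
        lintegral_mono_ae hptwise
      _ = M u + ∫⁻ v, ENNReal.ofReal (psi u / piU u) * ENNReal.ofReal (piUV u v) ∂ν := by
          rw [lintegral_add_left]
          exact (((hsec_meas u).div hpiV_meas).pow measurable_const |>.mul
            ((hsec_meas u).div measurable_const) |>.div measurable_const).ennreal_ofReal
      _ = M u + ENNReal.ofReal (psi u / piU u) * ∫⁻ v, ENNReal.ofReal (piUV u v) ∂ν := by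
          rw [lintegral_const_mul' _ _ ENNReal.ofReal_ne_top]
  -- T2 is a.e. finite
  have hMtot : ∫⁻ u, M u ∂μ < ⊤ := hmom
  have hBnull : ∀ᵐ u ∂μ, T2 u ≠ ⊤ := by
    have hBm : MeasurableSet {u | T2 u = ⊤} := hT2meas (measurableSet_singleton ⊤)
    have hind : ∀ᵐ u ∂μ, Set.indicator {u | T2 u = ⊤} (fun _ => (⊤:ℝ≥0∞)) u ≤ M u := by
      filter_upwards [hUpos, hpsi_pos, hsec] with u h1 h2 h3
      by_cases hu : T2 u = ⊤
      · have hfin := fin u h1 h2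
        have hc : ENNReal.ofReal (psi u / piU u) * (∫⁻ v, ENNReal.ofReal (piUV u v) ∂ν) ≠ ⊤ :=
          ENNReal.mul_ne_top ENNReal.ofReal_ne_top h3.ne
        have hM : M u = ⊤ := by
          by_contra hM
          rw [hu] at hfin
          exact (ENNReal.add_lt_top.mpr ⟨lt_top_iff_ne_top.mpr hM,
            lt_top_iff_ne_top.mpr hc⟩).ne (top_le_iff.mp hfin)
        rw [Set.indicator_of_mem (by exact hu) _, hM]
      · rw [Set.indicator_of_notMem (by exact hu) _]
        exact zero_le
    have hle : ⊤ * μ {u | T2 u = ⊤} ≤ ∫⁻ u, M u ∂μ := by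
      calc ⊤ * μ {u | T2 u = ⊤}
          = ∫⁻ u, Set.indicator {u | T2 u = ⊤} (fun _ => (⊤:ℝ≥0∞)) u ∂μ := by
            rw [lintegral_indicator hBm, setLIntegral_const]
        _ ≤ ∫⁻ u, M u ∂μ := lintegral_mono_ae hind
    have hμB : μ {u | T2 u = ⊤} = 0 := by
      by_contra h
      rw [ENNReal.top_mul h] at hle
      exact hMtot.ne (top_le_iff.mp hle)
    rw [ae_iff]
    simpa using hμB
  -- ∫ T2 is finite thanks to hint
  have hT2p : ∀ᵐ u ∂μ, T2 u = ENNReal.ofReal (p u u) := by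
    filter_upwards [hBnull] with u hu
    have hqm : Measurable fun v => (piUV u v / piV v) * (piUV u v / piU u) :=
      ((hsec_meas u).div hpiV_meas).mul ((hsec_meas u).div measurable_const)
    have hqnn : 0 ≤ᵐ[ν] fun v => (piUV u v / piV v) * (piUV u v / piU u) :=
      Filter.Eventually.of_forall fun v =>
        mul_nonneg (div_nonneg (hnn u v) (hpiVnn v)) (div_nonneg (hnn u v) (hpiUnn u))
    have hintg : Integrable (fun v => (piUV u v / piV v) * (piUV u v / piU u)) ν :=
      ⟨hqm.aestronglyMeasurable, (hasFiniteIntegral_iff_ofReal hqnn).mpr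
        (lt_top_iff_ne_top.mpr hu)⟩
    rw [hp u u]
    exact (ofReal_integral_eq_lintegral_ofReal hintg hqnn).symm
  have hT2tot : ∫⁻ u, T2 u ∂μ < ⊤ := by
    rw [lintegral_congr_ae hT2p]
    exact hint
  -- conclusion
  calc ∫⁻ u, ∫⁻ v', (∫⁻ v, ENNReal.ofReal ((piUV u v / (piV v * psi u)) ^ 2) ∂(r v')) *
        ENNReal.ofReal ((piUV u v' / piU u) * psi u) ∂ν ∂μ
      ≤ ∫⁻ u, (T2 u + M u) ∂μ := by
        apply lintegral_mono_ae
        filter_upwards [hUpos, hpsi_pos] with u h1 h2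
        exact main u h1 h2
    _ = (∫⁻ u, T2 u ∂μ) + ∫⁻ u, M u ∂μ := lintegral_add_left hT2meas _
    _ < ⊤ := ENNReal.add_lt_top.mpr ⟨hT2tot, hMtot⟩
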